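/- Under the setup of the previous two identities (A annihilates 1 and scales 1^⊥ by 1/√n, φ and φ̃ agree in the 1-direction with ⟨φ,1⟩ = ⟨φ̃,1⟩ = v1 - v0): if ‖Aφ̃ - b‖₂² ≤ (1+ε)·‖Aφ - b‖₂² where φ minimizes ‖Ax - b‖₂ subject to ⟨x,1⟩ = v1 - v0, and γ = ‖Aφ - b‖₂²/‖Aφ‖₂², then ‖φ - φ̃‖₂² ≤ ε·γ·‖φ‖₂². -/

import Mathlib

open Matrix

theorem l2_error_bound (n m : ℕ) (hn : 2 ≤ n)
    (A : Matrix (Fin m) (Fin n) ℝ)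
    (hA1 : A *ᵥ (fun _ => (1 : ℝ)) = 0)
    (hAiso : ∀ x : Fin n → ℝ, (∑ i, x i) = 0 →
      ∑ p, ((A *ᵥ x) p) ^ 2 = (1 / n : ℝ) * ∑ i, (x i) ^ 2)
    (b : Fin m → ℝ) (v1 v0 : ℝ)
    (φ φt : Fin n → ℝ)
    (hφc : (∑ i, φ i) = v1 - v0) (hφtc : (∑ i, φt i) = v1 - v0)
    (hmin : ∀ x : Fin n → ℝ, (∑ i, x i) = v1 - v0 →
      ∑ p, ((A *ᵥ φ) p - b p) ^ 2 ≤ ∑ p, ((A *ᵥ x) p - b p) ^ 2)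
    (hAφ : (∑ p, ((A *ᵥ φ) p) ^ 2) ≠ 0)
    (ε : ℝ) (hε : 0 ≤ ε)
    (happrox : ∑ p, ((A *ᵥ φt) p - b p) ^ 2 ≤ (1 + ε) * ∑ p, ((A *ᵥ φ) p - b p) ^ 2)
    (γ : ℝ) (hγ : γ = (∑ p, ((A *ᵥ φ) p - b p) ^ 2) / (∑ p, ((A *ᵥ φ) p) ^ 2)) :
    ∑ i, (φ i - φt i) ^ 2 ≤ ε * γ * ∑ i, (φ i) ^ 2 := by
  have hn0 : (0:ℝ) < n := by positivity
  set d : Fin n → ℝ := φ - φt with hd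
  have hdsum : (∑ i, d i) = 0 := by
    simp [hd, Finset.sum_sub_distrib, hφc, hφtc]
  have hAd : A *ᵥ d = (A *ᵥ φ) - (A *ᵥ φt) := by
    rw [hd, Matrix.mulVec_sub]
  -- isometry on d
  have hiso_d : ∑ p, ((A *ᵥ d) p) ^ 2 = (1 / n : ℝ) * ∑ i, (d i) ^ 2 := hAiso d hdsum
  -- residual and quantities
  set r : Fin m → ℝ := fun p => (A *ᵥ φ) p - b p with hr
  set a : ℝ := ∑ p, r p * (A *ᵥ d) p with ha
  set c : ℝ := ∑ p, ((A *ᵥ d) p) ^ 2 with hc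
  have hc0 : 0 ≤ c := Finset.sum_nonneg fun _ _ => sq_nonneg _
  have hr0 : 0 ≤ ∑ p, r p ^ 2 := Finset.sum_nonneg fun _ _ => sq_nonneg _
  -- orthogonality: a = 0
  have hkey : ∀ t : ℝ, ∑ p, r p ^ 2 ≤ ∑ p, r p ^ 2 - 2 * t * a + t ^ 2 * c := by
    intro t
    have hx : (∑ i, (φ i - t * d i)) = v1 - v0 := by
      rw [Finset.sum_sub_distrib, ← Finset.mul_sum, hdsum, hφc]; ring
    have := hmin (fun i => φ i - t * d i) hx
    have hAx : A *ᵥ (fun i => φ i - t * d i) = fun p => (A *ᵥ φ) p - t * (A *ᵥ d) p := by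
      have : (fun i => φ i - t * d i) = φ - t • d := by
        funext i; simp [smul_eq_mul]
      rw [this, Matrix.mulVec_sub, Matrix.mulVec_smul]
      funext p; simp [smul_eq_mul]
    rw [hAx] at this
    calc ∑ p, r p ^ 2 ≤ ∑ p, ((A *ᵥ φ) p - t * (A *ᵥ d) p - b p) ^ 2 := this
      _ = ∑ p, (r p ^ 2 - 2 * t * (r p * (A *ᵥ d) p) + t ^ 2 * ((A *ᵥ d) p) ^ 2) := by
          apply Finset.sum_congr rfl; intro p _; simp only [hr]; ring
      _ = ∑ p, r p ^ 2 - 2 * t * a + t ^ 2 * c := by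
          rw [Finset.sum_add_distrib, Finset.sum_sub_distrib, ← Finset.mul_sum,
            ← Finset.mul_sum, ha, hc]
  have ha0 : a = 0 := by
    by_contra h
    have hpos : 0 < a ^ 2 := by positivity
    have h1 := hkey (a / (c + 1))
    have hc1 : (0:ℝ) < c + 1 := by linarith
    have key : -2 * (a / (c+1)) * a + (a / (c+1))^2 * c
        = -(a^2 * (c+2)) / (c+1)^2 := by field_simp; ring
    have h2 : 0 ≤ -(a^2 * (c+2)) / (c+1)^2 := by rw [← key]; linarith
    rw [neg_div] at h2
    have h3 : 0 < (a^2 * (c+2)) / (c+1)^2 :=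
      div_pos (mul_pos hpos (by linarith)) (by positivity)
    linarith
  -- Pythagoras from happrox : c ≤ ε * ∑ r²
  have hpy : ∑ p, ((A *ᵥ φt) p - b p) ^ 2 = ∑ p, r p ^ 2 - 2 * a + c := by
    have : ∀ p, (A *ᵥ φt) p - b p = r p - (A *ᵥ d) p := by
      intro p; simp only [hr, hAd, Pi.sub_apply]; ring
    calc ∑ p, ((A *ᵥ φt) p - b p) ^ 2 = ∑ p, (r p - (A *ᵥ d) p) ^ 2 := by
          apply Finset.sum_congr rfl; intro p _; rw [this p]
      _ = ∑ p, (r p ^ 2 - 2 * (r p * (A *ᵥ d) p) + ((A *ᵥ d) p)^2) := by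
          apply Finset.sum_congr rfl; intro p _; ring
      _ = ∑ p, r p ^ 2 - 2 * a + c := by
          rw [Finset.sum_add_distrib, Finset.sum_sub_distrib, ← Finset.mul_sum, ha, hc]
  have hcε : c ≤ ε * ∑ p, r p ^ 2 := by
    rw [hpy, ha0] at happrox
    have : ∑ p, ((A *ᵥ φ) p - b p) ^ 2 = ∑ p, r p ^ 2 := rfl
    rw [this] at happrox
    nlinarith
  -- bound on ‖Aφ‖² ≤ (1/n) ∑ φ²
  have hAφle : ∑ p, ((A *ᵥ φ) p) ^ 2 ≤ (1 / n : ℝ) * ∑ i, (φ i) ^ 2 := by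
    set c0 : ℝ := (v1 - v0) / n with hc0'
    set ψ : Fin n → ℝ := fun i => φ i - c0 with hψ
    have hψsum : (∑ i, ψ i) = 0 := by
      have hne : (n:ℝ) ≠ 0 := ne_of_gt hn0
      simp only [hψ]
      rw [Finset.sum_sub_distrib, hφc, Finset.sum_const, Finset.card_fin, nsmul_eq_mul, hc0']
      field_simp; ring
    have hAψ : A *ᵥ ψ = A *ᵥ φ := by
      have : ψ = φ - c0 • (fun _ => (1:ℝ)) := by
        funext i; simp [hψ, smul_eq_mul]
      rw [this, Matrix.mulVec_sub, Matrix.mulVec_smul, hA1]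
      simp
    have hiso := hAiso ψ hψsum
    rw [hAψ] at hiso
    rw [hiso]
    have h1 : ∑ i, (ψ i) ^ 2 ≤ ∑ i, (φ i) ^ 2 := by
      have expand : ∑ i, (ψ i) ^ 2 = ∑ i, (φ i)^2 - 2 * c0 * (v1 - v0) + n * c0^2 := by
        have : ∀ i, (ψ i)^2 = (φ i)^2 - 2*c0*(φ i) + c0^2 := by intro i; simp [hψ]; ring
        rw [Finset.sum_congr rfl (fun i _ => this i), Finset.sum_add_distrib,
          Finset.sum_sub_distrib, ← Finset.mul_sum, hφc, Finset.sum_const,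
          Finset.card_fin, nsmul_eq_mul]
      rw [expand]
      have : n * c0^2 = (v1-v0)*c0 := by
        rw [hc0']; field_simp
      rw [this]
      nlinarith [sq_nonneg c0, hn0, sq_nonneg (v1 - v0), div_nonneg (sq_nonneg (v1-v0)) (le_of_lt hn0)]
    have := mul_le_mul_of_nonneg_left h1 (le_of_lt (by positivity : (0:ℝ) < 1/n))
    linarith
  -- combine
  have hrγ : ∑ p, r p ^ 2 = γ * ∑ p, ((A *ᵥ φ) p) ^ 2 := by
    rw [hγ, div_mul_cancel₀ _ hAφ]
  have hγ0 : 0 ≤ γ := by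
    rw [hγ]
    have : 0 < ∑ p, ((A *ᵥ φ) p) ^ 2 :=
      lt_of_le_of_ne (Finset.sum_nonneg fun _ _ => sq_nonneg _) (Ne.symm hAφ)
    exact div_nonneg hr0 this.le
  have hfinal : ∑ i, (d i) ^ 2 = n * c := by
    have hne : (n:ℝ) ≠ 0 := ne_of_gt hn0
    rw [hiso_d]; field_simp
  have : ∑ i, (φ i - φt i)^2 = ∑ i, (d i)^2 := by
    apply Finset.sum_congr rfl; intro i _; simp [hd]
  rw [this, hfinal]
  calc (n:ℝ) * c ≤ n * (ε * ∑ p, r p ^ 2) := by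
        exact mul_le_mul_of_nonneg_left hcε (le_of_lt hn0)
    _ = ε * γ * (n * ∑ p, ((A *ᵥ φ) p) ^ 2) := by rw [hrγ]; ring
    _ ≤ ε * γ * ∑ i, (φ i) ^ 2 := by
        apply mul_le_mul_of_nonneg_left _ (mul_nonneg hε hγ0)
        have := mul_le_mul_of_nonneg_left hAφle (le_of_lt hn0)
        have hne : (n:ℝ) ≠ 0 := ne_of_gt hn0
        calc (n:ℝ) * ∑ p, ((A *ᵥ φ) p) ^ 2 ≤ n * ((1/n) * ∑ i, (φ i)^2) := this
          _ = ∑ i, (φ i)^2 := by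
              rw [← mul_assoc, mul_one_div, div_self hne, one_mul]
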